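/- There is an absolute constant C such that for all real Y ≥ 1, ∑_{k > Y} 1/φ(k)² ≤ C/Y, where the sum is over integers k > Y. -/

import Mathlib

open scoped ENNReal


lemma totient_sq_aux : ∀ n : ℕ, n ≤ 2 * n.totient ^ 2 ∧ (Odd n → n ≤ n.totient ^ 2) := by
  intro n
  induction n using Nat.recOnPosPrimePosCoprime with
  | prime_pow p k hp hk =>
      have hp' : p.Prime := hp
      rw [Nat.totient_prime_pow hp' hk]
      have h1 : p ^ (k-1) ≤ (p ^ (k-1)) ^ 2 := Nat.le_self_pow (by norm_num) _
      have hpk : p ^ k = p * p ^ (k - 1) := by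
        rw [← _root_.pow_succ']; congr 1; omega
      constructor
      · have hq : 1 ≤ p - 1 := by have := hp'.two_le; omega
        have h2 : p ≤ 2 * (p - 1) ^ 2 := by
          have := hp'.two_le; nlinarith [Nat.sub_add_cancel (by omega : 1 ≤ p)]
        calc p ^ k = p * p ^ (k-1) := hpk
          _ ≤ (2 * (p-1)^2) * (p ^ (k-1))^2 := Nat.mul_le_mul h2 h1
          _ = 2 * (p ^ (k-1) * (p-1))^2 := by ring
      · intro hodd
        have hpodd : p ≠ 2 := by
          rintro rfl
          have : Even (2 ^ k) := Nat.even_pow.mpr ⟨even_two, hk.ne'⟩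
          exact (Nat.not_odd_iff_even.mpr this) hodd
        have hp3 : 3 ≤ p := by have := hp'.two_le; omega
        have h2 : p ≤ (p - 1) ^ 2 := by
          nlinarith [Nat.sub_add_cancel (by omega : 1 ≤ p)]
        calc p ^ k = p * p ^ (k-1) := hpk
          _ ≤ ((p-1)^2) * (p ^ (k-1))^2 := Nat.mul_le_mul h2 h1
          _ = (p ^ (k-1) * (p-1))^2 := by ring
  | zero => exact ⟨by norm_num, by intro h; exact absurd h (by decide)⟩
  | one => exact ⟨by norm_num, by intro _; norm_num⟩
  | coprime a b ha hb hab iha ihb =>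
      rw [Nat.totient_mul hab]
      constructor
      · by_cases hoa : Odd a
        · calc a * b ≤ (a.totient^2) * (2 * b.totient^2) := Nat.mul_le_mul (iha.2 hoa) ihb.1
            _ = 2 * (a.totient * b.totient)^2 := by ring
        · have hob : Odd b := by
            rcases Nat.even_or_odd b with hb' | hb'
            · exfalso
              have h2a : 2 ∣ a := (Nat.not_odd_iff_even.mp hoa).two_dvd
              have h2b : 2 ∣ b := hb'.two_dvd
              have h21 : (2:ℕ) ∣ 1 := hab ▸ Nat.dvd_gcd h2a h2b
              omega
            · exact hb'
          calc a * b ≤ (2 * a.totient^2) * (b.totient^2) := Nat.mul_le_mul iha.1 (ihb.2 hob)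
            _ = 2 * (a.totient * b.totient)^2 := by ring
      · intro hodd
        have hoa : Odd a := (Nat.Odd.of_mul_left hodd)
        have hob : Odd b := (Nat.Odd.of_mul_right hodd)
        calc a * b ≤ (a.totient^2) * (b.totient^2) := Nat.mul_le_mul (iha.2 hoa) (ihb.2 hob)
          _ = (a.totient * b.totient)^2 := by ring


lemma le_totient_mul_sum (k : ℕ) (hk : k ≠ 0) :
    (k : ℝ≥0∞) ≤ (k.totient : ℝ≥0∞) * ∑ d ∈ k.divisors, ((d.totient : ℝ≥0∞))⁻¹ := by
  have h1 : (k : ℝ≥0∞) = ∑ d ∈ k.divisors, ((k / d).totient : ℝ≥0∞) := by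
    have : ∑ d ∈ k.divisors, (k / d).totient = k := by
      rw [Nat.sum_div_divisors k Nat.totient]
      exact Nat.sum_totient k
    exact_mod_cast this.symm
  rw [h1, Finset.mul_sum]
  apply Finset.sum_le_sum
  intro d hd
  have hdvd : d ∣ k := (Nat.mem_divisors.mp hd).1
  have hd0 : d ≠ 0 := by rintro rfl; exact hk (Nat.eq_zero_of_zero_dvd hdvd)
  have hφd : 0 < d.totient := Nat.totient_pos.mpr (Nat.pos_of_ne_zero hd0)
  have hnat : (k / d).totient * d.totient ≤ k.totient := by
    calc (k / d).totient * d.totient ≤ ((k / d) * d).totient :=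
          Nat.totient_super_multiplicative _ _
      _ = k.totient := by rw [Nat.div_mul_cancel hdvd]
  rw [← div_eq_mul_inv]
  refine (ENNReal.le_div_iff_mul_le (Or.inl ?_) (Or.inl (ENNReal.natCast_ne_top _))).mpr ?_
  · exact_mod_cast hφd.ne'
  · exact_mod_cast hnat

lemma inv_totient_sq_le (k : ℕ) (hk : k ≠ 0) :
    ((k.totient : ℝ≥0∞))⁻¹ ^ 2 ≤
      ((k : ℝ≥0∞))⁻¹ ^ 2 * (∑ d ∈ k.divisors, ((d.totient : ℝ≥0∞))⁻¹) ^ 2 := by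
  have hφ : 0 < k.totient := Nat.totient_pos.mpr (Nat.pos_of_ne_zero hk)
  have hφ0 : ((k.totient : ℝ≥0∞)) ≠ 0 := by exact_mod_cast hφ.ne'
  have hφt : ((k.totient : ℝ≥0∞)) ≠ ∞ := ENNReal.natCast_ne_top _
  have hk0 : ((k : ℝ≥0∞)) ≠ 0 := by exact_mod_cast hk
  have hkt : ((k : ℝ≥0∞)) ≠ ∞ := ENNReal.natCast_ne_top _
  have h1 : ((k.totient : ℝ≥0∞))⁻¹ ≤
      ((k : ℝ≥0∞))⁻¹ * ∑ d ∈ k.divisors, ((d.totient : ℝ≥0∞))⁻¹ := by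
    calc ((k.totient : ℝ≥0∞))⁻¹
        = ((k : ℝ≥0∞))⁻¹ * ((k : ℝ≥0∞) * ((k.totient : ℝ≥0∞))⁻¹) := by
          rw [← mul_assoc, ENNReal.inv_mul_cancel hk0 hkt, one_mul]
      _ ≤ ((k : ℝ≥0∞))⁻¹ *
          (((k.totient : ℝ≥0∞) * ∑ d ∈ k.divisors, ((d.totient : ℝ≥0∞))⁻¹) *
            ((k.totient : ℝ≥0∞))⁻¹) := by
          gcongr
          exact le_totient_mul_sum k hk
      _ = ((k : ℝ≥0∞))⁻¹ * ∑ d ∈ k.divisors, ((d.totient : ℝ≥0∞))⁻¹ := by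
          rw [mul_comm ((k.totient : ℝ≥0∞)) _, mul_assoc _ _ (((k.totient : ℝ≥0∞))⁻¹),
            ENNReal.mul_inv_cancel hφ0 hφt, mul_one]
  calc ((k.totient : ℝ≥0∞))⁻¹ ^ 2
      ≤ (((k : ℝ≥0∞))⁻¹ * ∑ d ∈ k.divisors, ((d.totient : ℝ≥0∞))⁻¹) ^ 2 := by
        gcongr
    _ = ((k : ℝ≥0∞))⁻¹ ^ 2 * (∑ d ∈ k.divisors, ((d.totient : ℝ≥0∞))⁻¹) ^ 2 := mul_pow _ _ 2


lemma real_partial_tail (M : ℕ) (hM : 1 ≤ M) (n : ℕ) :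
    ∑ i ∈ Finset.range n, (if M ≤ i then 1 / (i : ℝ) ^ 2 else 0) ≤ 2 / (M : ℝ) := by
  have key : ∀ n : ℕ, ∑ i ∈ Finset.range n, (if M ≤ i then 1 / (i : ℝ) ^ 2 else 0)
      ≤ 2 / (M : ℝ) - 2 / ((max M n : ℕ) : ℝ) := by
    intro n
    induction n with
    | zero => simp
    | succ n ih =>
      rw [Finset.sum_range_succ]
      rcases le_or_gt M n with hMn | hMn
      · have hmaxn : max M n = n := Nat.max_eq_right hMn
        have hmax : max M (n + 1) = n + 1 := Nat.max_eq_right (by omega)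
        rw [hmaxn] at ih
        rw [hmax, if_pos hMn]
        have hn1 : (1 : ℝ) ≤ (n : ℝ) := by exact_mod_cast le_trans hM hMn
        have hstep : 1 / (n : ℝ) ^ 2 ≤ 2 / (n : ℝ) - 2 / ((n : ℝ) + 1) := by
          rw [div_sub_div _ _ (by positivity) (by positivity),
            div_le_div_iff₀ (by positivity) (by positivity)]
          nlinarith
        push_cast
        push_cast at ih
        linarith
      · have hn : ¬(M ≤ n) := by omega
        rw [if_neg hn, add_zero]
        have hmax : max M (n + 1) = M := Nat.max_eq_left (by omega)
        have hmaxn : max M n = M := Nat.max_eq_left (by omega)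
        rw [hmax]; rw [hmaxn] at ih; exact ih
  refine le_trans (key n) ?_
  have : (0:ℝ) ≤ 2 / ((max M n : ℕ) : ℝ) := by positivity
  linarith

lemma tail_sq (M : ℕ) (hM : 1 ≤ M) :
    ∑' m : ℕ, (if M ≤ m then ((m : ℝ≥0∞))⁻¹ ^ 2 else 0) ≤ ENNReal.ofReal (2 / (M : ℝ)) := by
  apply ENNReal.tsum_le_of_sum_range_le
  intro n
  have hpt : ∀ i : ℕ, (if M ≤ i then ((i : ℝ≥0∞))⁻¹ ^ 2 else 0)
      = ENNReal.ofReal (if M ≤ i then 1 / (i : ℝ) ^ 2 else 0) := by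
    intro i
    split
    · rename_i hi
      have hipos : (0:ℝ) < (i:ℝ) := by exact_mod_cast lt_of_lt_of_le hM (by omega)
      rw [one_div, ← inv_pow, ENNReal.ofReal_pow (by positivity),
        ENNReal.ofReal_inv_of_pos hipos, ENNReal.ofReal_natCast]
    · simp
  calc ∑ i ∈ Finset.range n, (if M ≤ i then ((i : ℝ≥0∞))⁻¹ ^ 2 else 0)
      = ∑ i ∈ Finset.range n, ENNReal.ofReal (if M ≤ i then 1 / (i : ℝ) ^ 2 else 0) :=
        Finset.sum_congr rfl fun i _ => hpt i
    _ = ENNReal.ofReal (∑ i ∈ Finset.range n, (if M ≤ i then 1 / (i : ℝ) ^ 2 else 0)) := by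
        rw [ENNReal.ofReal_sum_of_nonneg]
        intro i _
        positivity
    _ ≤ ENNReal.ofReal (2 / (M : ℝ)) := ENNReal.ofReal_le_ofReal (real_partial_tail M hM n)


lemma tsum_if_dvd_eq (L : ℕ) (hL : L ≠ 0) (f : ℕ → ℝ≥0∞) :
    ∑' k : ℕ, (if L ∣ k then f k else 0) = ∑' m : ℕ, f (L * m) := by
  have hinj : Function.Injective (fun m : ℕ => L * m) :=
    fun a b h => by simpa [Nat.mul_left_cancel_iff (Nat.pos_of_ne_zero hL)] using h
  have hsupp : Function.support (fun k : ℕ => if L ∣ k then f k else 0)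
      ⊆ Set.range (fun m : ℕ => L * m) := by
    intro k hk
    by_cases hdvd : L ∣ k
    · obtain ⟨m, rfl⟩ := hdvd; exact ⟨m, rfl⟩
    · simp [hdvd] at hk
  have := hinj.tsum_eq hsupp
  rw [← this]
  apply tsum_congr
  intro m
  simp [Dvd.intro m rfl]

lemma inner_bound (Y : ℝ) (hY : 1 ≤ Y) (d e : ℕ) (hd : d ≠ 0) (he : e ≠ 0) :
    ∑' k : ℕ, (if Y < (k : ℝ) ∧ d ∣ k ∧ e ∣ k then ((k : ℝ≥0∞))⁻¹ ^ 2 else 0)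
      ≤ ENNReal.ofReal (2 / Y) * ((Nat.lcm d e : ℝ≥0∞))⁻¹ := by
  set L := Nat.lcm d e with hLdef
  have hL : L ≠ 0 := Nat.lcm_ne_zero hd he
  have hLpos : (0:ℝ) < (L:ℝ) := by exact_mod_cast Nat.pos_of_ne_zero hL
  set M := Nat.floor (Y / L) + 1 with hMdef
  have hM1 : 1 ≤ M := by omega
  have hYM : Y ≤ (L : ℝ) * (M : ℝ) := by
    have h1 : Y / L < M := by
      push_cast [hMdef]
      exact Nat.lt_floor_add_one _
    calc Y = L * (Y / L) := by field_simp
      _ ≤ L * M := by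
        apply mul_le_mul_of_nonneg_left h1.le hLpos.le
  -- step 1 : condition implies L ∣ k
  have step1 : ∀ k : ℕ, (if Y < (k : ℝ) ∧ d ∣ k ∧ e ∣ k then ((k : ℝ≥0∞))⁻¹ ^ 2 else 0)
      = (if L ∣ k then (if Y < (k : ℝ) then ((k : ℝ≥0∞))⁻¹ ^ 2 else 0) else 0) := by
    intro k
    by_cases h1 : L ∣ k
    · by_cases h2 : Y < (k : ℝ)
      · rw [if_pos ⟨h2, (Nat.dvd_lcm_left d e).trans h1, (Nat.dvd_lcm_right d e).trans h1⟩,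
          if_pos h1, if_pos h2]
      · rw [if_neg (fun h => h2 h.1), if_pos h1, if_neg h2]
    · rw [if_neg (fun h => h1 (Nat.lcm_dvd h.2.1 h.2.2)), if_neg h1]
  calc ∑' k : ℕ, (if Y < (k : ℝ) ∧ d ∣ k ∧ e ∣ k then ((k : ℝ≥0∞))⁻¹ ^ 2 else 0)
      = ∑' k : ℕ, (if L ∣ k then (if Y < (k : ℝ) then ((k : ℝ≥0∞))⁻¹ ^ 2 else 0) else 0) :=
        tsum_congr step1
    _ = ∑' m : ℕ, (if Y < ((L * m : ℕ) : ℝ) then (((L * m : ℕ) : ℝ≥0∞))⁻¹ ^ 2 else 0) :=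
        tsum_if_dvd_eq L hL (fun k => if Y < (k : ℝ) then ((k : ℝ≥0∞))⁻¹ ^ 2 else 0)
    _ ≤ ∑' m : ℕ, (if M ≤ m then ((L : ℝ≥0∞))⁻¹ ^ 2 * ((m : ℝ≥0∞))⁻¹ ^ 2 else 0) := by
        apply ENNReal.tsum_le_tsum
        intro m
        by_cases h2 : Y < ((L * m : ℕ) : ℝ)
        · have hm : M ≤ m := by
            have : Y / L < (m : ℝ) := by
              rw [div_lt_iff₀ hLpos]
              push_cast at h2 ⊢
              linarith [h2]
            have := (Nat.floor_lt (by positivity)).mpr this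
            omega
          rw [if_pos h2, if_pos hm]
          have hm0 : (m : ℝ≥0∞) ≠ 0 := by
            have : m ≠ 0 := by rintro rfl; omega
            exact_mod_cast this
          rw [← mul_pow]
          apply pow_le_pow_left'
          rw [← ENNReal.mul_inv (Or.inl (by exact_mod_cast hL)) (Or.inr hm0)]
          apply le_of_eq
          congr 1
          push_cast
          ring
        · rw [if_neg h2]
          exact zero_le
    _ = ((L : ℝ≥0∞))⁻¹ ^ 2 * ∑' m : ℕ, (if M ≤ m then ((m : ℝ≥0∞))⁻¹ ^ 2 else 0) := by
        rw [← ENNReal.tsum_mul_left]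
        apply tsum_congr
        intro m
        by_cases hm : M ≤ m <;> simp [hm]
    _ ≤ ((L : ℝ≥0∞))⁻¹ ^ 2 * ENNReal.ofReal (2 / (M : ℝ)) := by
        gcongr
        exact tail_sq M hM1
    _ ≤ ENNReal.ofReal (2 / Y) * ((L : ℝ≥0∞))⁻¹ := by
        rw [pow_two, mul_comm, ← mul_assoc]
        gcongr ?_ * _
        have hLinv : ((L : ℝ≥0∞))⁻¹ = ENNReal.ofReal (1 / (L:ℝ)) := by
          rw [one_div, ENNReal.ofReal_inv_of_pos hLpos, ENNReal.ofReal_natCast]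
        rw [hLinv, mul_comm, ← ENNReal.ofReal_mul (by positivity)]
        apply ENNReal.ofReal_le_ofReal
        rw [div_mul_div_comm, one_mul]
        have h0Y : (0:ℝ) < Y := by linarith
        have hML : (0:ℝ) < (L:ℝ) * M := by positivity
        rw [div_le_div_iff₀ hML h0Y]
        nlinarith [hYM]


lemma lcm_inv_eq (d e : ℕ) (hd : d ≠ 0) (he : e ≠ 0) :
    ((Nat.lcm d e : ℝ≥0∞))⁻¹ = (Nat.gcd d e : ℝ≥0∞) * ((d : ℝ≥0∞))⁻¹ * ((e : ℝ≥0∞))⁻¹ := by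
  have hg : Nat.gcd d e ≠ 0 := Nat.gcd_ne_zero_left hd
  have hg0 : ((Nat.gcd d e : ℝ≥0∞)) ≠ 0 := by exact_mod_cast hg
  have hgt : ((Nat.gcd d e : ℝ≥0∞)) ≠ ∞ := ENNReal.natCast_ne_top _
  have hd0 : ((d : ℝ≥0∞)) ≠ 0 := by exact_mod_cast hd
  have he0 : ((e : ℝ≥0∞)) ≠ 0 := by exact_mod_cast he
  have key : (Nat.gcd d e : ℝ≥0∞) * (Nat.lcm d e : ℝ≥0∞) = (d : ℝ≥0∞) * e := by
    have := Nat.gcd_mul_lcm d e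
    exact_mod_cast congrArg (fun n : ℕ => (n : ℝ≥0∞)) this
  calc ((Nat.lcm d e : ℝ≥0∞))⁻¹
      = (Nat.gcd d e : ℝ≥0∞) * (((Nat.gcd d e : ℝ≥0∞))⁻¹ * ((Nat.lcm d e : ℝ≥0∞))⁻¹) := by
        rw [← mul_assoc, ENNReal.mul_inv_cancel hg0 hgt, one_mul]
    _ = (Nat.gcd d e : ℝ≥0∞) * ((d : ℝ≥0∞) * (e : ℝ≥0∞))⁻¹ := by
        have hl0 : ((Nat.lcm d e : ℝ≥0∞)) ≠ 0 := by
          exact_mod_cast Nat.lcm_ne_zero hd he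
        rw [← ENNReal.mul_inv (Or.inl hg0) (Or.inr hl0), key]
    _ = (Nat.gcd d e : ℝ≥0∞) * ((d : ℝ≥0∞))⁻¹ * ((e : ℝ≥0∞))⁻¹ := by
        rw [ENNReal.mul_inv (Or.inl hd0) (Or.inr he0), mul_assoc]

lemma gcd_expand (d e : ℕ) (hd : d ≠ 0) :
    (Nat.gcd d e : ℝ≥0∞)
      = ∑' g : ℕ, (if g ∣ d ∧ g ∣ e then (Nat.totient g : ℝ≥0∞) else 0) := by
  have hg : Nat.gcd d e ≠ 0 := Nat.gcd_ne_zero_left hd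
  rw [tsum_eq_sum (s := (Nat.gcd d e).divisors) ?_]
  · have : ∀ g ∈ (Nat.gcd d e).divisors,
        (if g ∣ d ∧ g ∣ e then (Nat.totient g : ℝ≥0∞) else 0) = (Nat.totient g : ℝ≥0∞) := by
      intro g hgmem
      have hdvd := (Nat.mem_divisors.mp hgmem).1
      exact if_pos ⟨hdvd.trans (Nat.gcd_dvd_left d e), hdvd.trans (Nat.gcd_dvd_right d e)⟩
    rw [Finset.sum_congr rfl this]
    exact_mod_cast congrArg (fun n : ℕ => (n : ℝ≥0∞)) (Nat.sum_totient _) |>.symm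
  · intro g hgmem
    rw [if_neg]
    rintro ⟨h1, h2⟩
    exact hgmem (Nat.mem_divisors.mpr ⟨Nat.dvd_gcd h1 h2, hg⟩)

noncomputable def uu (a : ℕ) : ℝ≥0∞ :=
  if a = 0 then 0 else ((Nat.totient a : ℝ≥0∞))⁻¹ * ((a : ℝ≥0∞))⁻¹

noncomputable def vv (g : ℕ) : ℝ≥0∞ :=
  if g = 0 then 0 else ((Nat.totient g : ℝ≥0∞))⁻¹ * (((g : ℝ≥0∞))⁻¹) ^ 2

lemma rpow_eq_sqrt_cube (a : ℕ) : ((a:ℝ)) ^ ((3:ℝ)/2) = Real.sqrt ((a:ℝ) ^ 3) := by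
  rw [Real.sqrt_eq_rpow, ← Real.rpow_natCast (a:ℝ) 3, ← Real.rpow_mul (Nat.cast_nonneg a)]
  norm_num

lemma rpow_eq_sqrt_five (a : ℕ) : ((a:ℝ)) ^ ((5:ℝ)/2) = Real.sqrt ((a:ℝ) ^ 5) := by
  rw [Real.sqrt_eq_rpow, ← Real.rpow_natCast (a:ℝ) 5, ← Real.rpow_mul (Nat.cast_nonneg a)]
  norm_num

lemma uu_le (a : ℕ) : uu a ≤ ENNReal.ofReal (2 * (1 / (a:ℝ) ^ ((3:ℝ)/2))) := by
  rcases eq_or_ne a 0 with rfl | ha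
  · simp [uu]
  · have hapos : 0 < a := Nat.pos_of_ne_zero ha
    have haR : (0:ℝ) < a := by exact_mod_cast hapos
    have hφ : 0 < a.totient := Nat.totient_pos.mpr hapos
    have hφR : (0:ℝ) < a.totient := by exact_mod_cast hφ
    have hval : uu a = ENNReal.ofReal (((a.totient : ℝ) * a)⁻¹) := by
      rw [uu, if_neg ha, mul_inv]
      rw [ENNReal.ofReal_mul (by positivity), ENNReal.ofReal_inv_of_pos hφR,
        ENNReal.ofReal_inv_of_pos haR, ENNReal.ofReal_natCast, ENNReal.ofReal_natCast]
    rw [hval]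
    apply ENNReal.ofReal_le_ofReal
    have hnat : a ^ 3 ≤ (2 * a.totient * a) ^ 2 := by
      have := (totient_sq_aux a).1
      nlinarith
    have h1 : (a:ℝ) ^ ((3:ℝ)/2) ≤ 2 * (a.totient * a) := by
      rw [rpow_eq_sqrt_cube]
      have h2 : ((a:ℝ) ^ 3) ≤ (2 * ((a.totient:ℝ) * a)) ^ 2 := by
        have : ((a ^ 3 : ℕ) : ℝ) ≤ (((2 * a.totient * a) ^ 2 : ℕ) : ℝ) := by
          exact_mod_cast hnat
        push_cast at this
        nlinarith [this]
      calc Real.sqrt ((a:ℝ) ^ 3) ≤ Real.sqrt ((2 * ((a.totient:ℝ) * a)) ^ 2) :=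
            Real.sqrt_le_sqrt h2
        _ = 2 * ((a.totient:ℝ) * a) := Real.sqrt_sq (by positivity)
    rw [mul_one_div, inv_eq_one_div, div_le_div_iff₀ (by positivity) (by positivity)]
    nlinarith [h1]

lemma vv_le (a : ℕ) : vv a ≤ ENNReal.ofReal (2 * (1 / (a:ℝ) ^ ((5:ℝ)/2))) := by
  rcases eq_or_ne a 0 with rfl | ha
  · simp [vv]
  · have hapos : 0 < a := Nat.pos_of_ne_zero ha
    have haR : (0:ℝ) < a := by exact_mod_cast hapos
    have hφ : 0 < a.totient := Nat.totient_pos.mpr hapos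
    have hφR : (0:ℝ) < a.totient := by exact_mod_cast hφ
    have hval : vv a = ENNReal.ofReal (((a.totient : ℝ) * a ^ 2)⁻¹) := by
      rw [vv, if_neg ha, mul_inv]
      rw [ENNReal.ofReal_mul (by positivity), ENNReal.ofReal_inv_of_pos hφR,
        ENNReal.ofReal_inv_of_pos (by positivity), ENNReal.ofReal_natCast,
        ENNReal.ofReal_pow (by positivity), ENNReal.ofReal_natCast, ← ENNReal.inv_pow]
    rw [hval]
    apply ENNReal.ofReal_le_ofReal
    have hnat : a ^ 5 ≤ (2 * a.totient * a ^ 2) ^ 2 := by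
      have := (totient_sq_aux a).1
      nlinarith
    have h1 : (a:ℝ) ^ ((5:ℝ)/2) ≤ 2 * (a.totient * a ^ 2) := by
      rw [rpow_eq_sqrt_five]
      have h2 : ((a:ℝ) ^ 5) ≤ (2 * ((a.totient:ℝ) * a ^ 2)) ^ 2 := by
        have : ((a ^ 5 : ℕ) : ℝ) ≤ (((2 * a.totient * a ^ 2) ^ 2 : ℕ) : ℝ) := by
          exact_mod_cast hnat
        push_cast at this
        nlinarith [this]
      calc Real.sqrt ((a:ℝ) ^ 5) ≤ Real.sqrt ((2 * ((a.totient:ℝ) * a ^ 2)) ^ 2) :=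
            Real.sqrt_le_sqrt h2
        _ = 2 * ((a.totient:ℝ) * a ^ 2) := Real.sqrt_sq (by positivity)
    rw [mul_one_div, inv_eq_one_div, div_le_div_iff₀ (by positivity) (by positivity)]
    nlinarith [h1]

noncomputable def c1 : ℝ := ∑' a : ℕ, 2 * (1 / (a:ℝ) ^ ((3:ℝ)/2))
noncomputable def c2 : ℝ := ∑' a : ℕ, 2 * (1 / (a:ℝ) ^ ((5:ℝ)/2))

lemma summable_c1 : Summable (fun a : ℕ => 2 * (1 / (a:ℝ) ^ ((3:ℝ)/2))) :=
  (Real.summable_one_div_nat_rpow.mpr (by norm_num)).mul_left 2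

lemma summable_c2 : Summable (fun a : ℕ => 2 * (1 / (a:ℝ) ^ ((5:ℝ)/2))) :=
  (Real.summable_one_div_nat_rpow.mpr (by norm_num)).mul_left 2

lemma c1_nonneg : 0 ≤ c1 := tsum_nonneg (fun a => by positivity)
lemma c2_nonneg : 0 ≤ c2 := tsum_nonneg (fun a => by positivity)

lemma tsum_uu_le : ∑' a : ℕ, uu a ≤ ENNReal.ofReal c1 := by
  calc ∑' a : ℕ, uu a ≤ ∑' a : ℕ, ENNReal.ofReal (2 * (1 / (a:ℝ) ^ ((3:ℝ)/2))) :=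
        ENNReal.tsum_le_tsum uu_le
    _ = ENNReal.ofReal c1 :=
        (ENNReal.ofReal_tsum_of_nonneg (fun a => by positivity) summable_c1).symm

lemma tsum_vv_le : ∑' a : ℕ, vv a ≤ ENNReal.ofReal c2 := by
  calc ∑' a : ℕ, vv a ≤ ∑' a : ℕ, ENNReal.ofReal (2 * (1 / (a:ℝ) ^ ((5:ℝ)/2))) :=
        ENNReal.tsum_le_tsum vv_le
    _ = ENNReal.ofReal c2 :=
        (ENNReal.ofReal_tsum_of_nonneg (fun a => by positivity) summable_c2).symm

lemma R_bound (g : ℕ) (hg : g ≠ 0) :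
    ∑' d : ℕ, (if g ∣ d then uu d else 0)
      ≤ ((Nat.totient g : ℝ≥0∞))⁻¹ * ((g : ℝ≥0∞))⁻¹ * ∑' a : ℕ, uu a := by
  rw [tsum_if_dvd_eq g hg uu]
  calc ∑' m : ℕ, uu (g * m)
      ≤ ∑' m : ℕ, (((Nat.totient g : ℝ≥0∞))⁻¹ * ((g : ℝ≥0∞))⁻¹ * uu m) := by
        apply ENNReal.tsum_le_tsum
        intro m
        rcases eq_or_ne m 0 with rfl | hm
        · simp [uu]
        · have hgm : g * m ≠ 0 := Nat.mul_ne_zero hg hm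
          rw [uu, if_neg hgm, uu, if_neg hm]
          have h1 : ((Nat.totient (g * m) : ℝ≥0∞))⁻¹
              ≤ ((Nat.totient g : ℝ≥0∞))⁻¹ * ((Nat.totient m : ℝ≥0∞))⁻¹ := by
            rw [← ENNReal.mul_inv (Or.inl ?_) (Or.inr ?_)]
            · apply ENNReal.inv_le_inv'
              exact_mod_cast Nat.totient_super_multiplicative g m
            · exact_mod_cast (Nat.totient_pos.mpr (Nat.pos_of_ne_zero hg)).ne'
            · exact_mod_cast (Nat.totient_pos.mpr (Nat.pos_of_ne_zero hm)).ne'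
          have h2 : (((g * m : ℕ) : ℝ≥0∞))⁻¹ = ((g : ℝ≥0∞))⁻¹ * ((m : ℝ≥0∞))⁻¹ := by
            rw [← ENNReal.mul_inv (Or.inl ?_) (Or.inr ?_)]
            · push_cast; rfl
            · exact_mod_cast hg
            · exact_mod_cast hm
          calc ((Nat.totient (g * m) : ℝ≥0∞))⁻¹ * (((g * m : ℕ) : ℝ≥0∞))⁻¹
              ≤ (((Nat.totient g : ℝ≥0∞))⁻¹ * ((Nat.totient m : ℝ≥0∞))⁻¹) *
                (((g : ℝ≥0∞))⁻¹ * ((m : ℝ≥0∞))⁻¹) := by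
                rw [h2]; exact mul_le_mul_left h1 _
            _ = ((Nat.totient g : ℝ≥0∞))⁻¹ * ((g : ℝ≥0∞))⁻¹ *
                (((Nat.totient m : ℝ≥0∞))⁻¹ * ((m : ℝ≥0∞))⁻¹) := by ring
    _ = ((Nat.totient g : ℝ≥0∞))⁻¹ * ((g : ℝ≥0∞))⁻¹ * ∑' a : ℕ, uu a :=
        ENNReal.tsum_mul_left

/-- There is an absolute constant `C` such that for all real `Y ≥ 1`,
`∑_{k > Y} 1 / φ(k)² ≤ C / Y`. -/
theorem tsum_one_div_totient_sq_tail_le :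
    ∃ C : ℝ, ∀ Y : ℝ, 1 ≤ Y →
      ∑' k : ℕ, (if Y < (k : ℝ) then 1 / (Nat.totient k : ℝ) ^ 2 else 0) ≤ C / Y := by
  refine ⟨2 * c1 ^ 2 * c2, fun Y hY => ?_⟩
  have hCnn : (0:ℝ) ≤ 2 * c1 ^ 2 * c2 :=
    mul_nonneg (mul_nonneg (by norm_num) (sq_nonneg c1)) c2_nonneg
  have hY0 : (0:ℝ) < Y := by linarith
  -- notation
  set A : ℝ≥0∞ := ENNReal.ofReal (2 / Y) with hA
  -- the triple-sum summand
  set t : ℕ → ℕ → ℕ → ℝ≥0∞ := fun k d e =>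
    (if d ∈ k.divisors then ((Nat.totient d : ℝ≥0∞))⁻¹ else 0) *
      ((if e ∈ k.divisors then ((Nat.totient e : ℝ≥0∞))⁻¹ else 0) *
        (if Y < (k : ℝ) then ((k : ℝ≥0∞))⁻¹ ^ 2 else 0)) with ht
  set Q : ℕ → ℕ → ℕ → ℝ≥0∞ := fun g d e =>
    A * ((if g ∣ d ∧ g ∣ e ∧ d ≠ 0 ∧ e ≠ 0 then (Nat.totient g : ℝ≥0∞) else 0) *
      (uu d * uu e)) with hQ
  have hk0 : ∀ k : ℕ, Y < (k : ℝ) → k ≠ 0 := by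
    rintro k hk rfl
    simp only [Nat.cast_zero] at hk
    linarith
  -- Main ENNReal estimate
  have main : ∑' k : ℕ, (if Y < (k : ℝ) then ((Nat.totient k : ℝ≥0∞))⁻¹ ^ 2 else 0)
      ≤ ENNReal.ofReal ((2 * c1 ^ 2 * c2) / Y) := by
    calc ∑' k : ℕ, (if Y < (k : ℝ) then ((Nat.totient k : ℝ≥0∞))⁻¹ ^ 2 else 0)
        ≤ ∑' k : ℕ, ∑' d : ℕ, ∑' e : ℕ, t k d e := by
          apply ENNReal.tsum_le_tsum
          intro k
          have hfin : (∑' d : ℕ, (if d ∈ k.divisors then ((Nat.totient d : ℝ≥0∞))⁻¹ else 0))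
              = ∑ d ∈ k.divisors, ((Nat.totient d : ℝ≥0∞))⁻¹ :=
            (tsum_eq_sum (fun b hb => if_neg hb)).trans
              (Finset.sum_congr rfl fun d hd => if_pos hd)
          have hinner : ∀ d : ℕ, (∑' e : ℕ, t k d e)
              = (if d ∈ k.divisors then ((Nat.totient d : ℝ≥0∞))⁻¹ else 0) *
                ((∑ d ∈ k.divisors, ((Nat.totient d : ℝ≥0∞))⁻¹) *
                  (if Y < (k : ℝ) then ((k : ℝ≥0∞))⁻¹ ^ 2 else 0)) := by
            intro d
            rw [ht]
            simp only []
            rw [ENNReal.tsum_mul_left, ENNReal.tsum_mul_right, hfin]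
          rw [tsum_congr hinner, ENNReal.tsum_mul_right, hfin]
          by_cases hYk : Y < (k : ℝ)
          · rw [if_pos hYk]
            have := inv_totient_sq_le k (hk0 k hYk)
            calc ((Nat.totient k : ℝ≥0∞))⁻¹ ^ 2
                ≤ ((k : ℝ≥0∞))⁻¹ ^ 2 *
                  (∑ d ∈ k.divisors, ((Nat.totient d : ℝ≥0∞))⁻¹) ^ 2 := this
              _ = (∑ d ∈ k.divisors, ((Nat.totient d : ℝ≥0∞))⁻¹) *
                  ((∑ d ∈ k.divisors, ((Nat.totient d : ℝ≥0∞))⁻¹) *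
                    (if Y < (k : ℝ) then ((k : ℝ≥0∞))⁻¹ ^ 2 else 0)) := by
                  rw [if_pos hYk]; ring
          · rw [if_neg hYk, if_neg hYk, mul_zero, mul_zero]
      _ = ∑' d : ℕ, ∑' e : ℕ, ∑' k : ℕ, t k d e := by
          calc ∑' k : ℕ, ∑' d : ℕ, ∑' e : ℕ, t k d e
              = ∑' d : ℕ, ∑' k : ℕ, ∑' e : ℕ, t k d e :=
                ENNReal.tsum_comm (f := fun k d => ∑' e : ℕ, t k d e)
            _ = ∑' d : ℕ, ∑' e : ℕ, ∑' k : ℕ, t k d e :=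
                tsum_congr fun d => ENNReal.tsum_comm (f := fun k e => t k d e)
      _ ≤ ∑' d : ℕ, ∑' e : ℕ, ∑' g : ℕ, Q g d e := by
          apply ENNReal.tsum_le_tsum; intro d
          apply ENNReal.tsum_le_tsum; intro e
          -- rewrite the inner k-sum
          have htr : ∀ k : ℕ, t k d e
              = ((Nat.totient d : ℝ≥0∞))⁻¹ * (((Nat.totient e : ℝ≥0∞))⁻¹ *
                  (if Y < (k : ℝ) ∧ d ∣ k ∧ e ∣ k then ((k : ℝ≥0∞))⁻¹ ^ 2 else 0)) := by
            intro k
            rw [ht]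
            by_cases h1 : Y < (k : ℝ)
            · have hk : k ≠ 0 := hk0 k h1
              by_cases h2 : d ∣ k <;> by_cases h3 : e ∣ k <;>
                simp [Nat.mem_divisors, h1, h2, h3, hk]
            · simp [h1]
          rw [tsum_congr htr, ENNReal.tsum_mul_left, ENNReal.tsum_mul_left]
          by_cases hde : d ≠ 0 ∧ e ≠ 0
          · obtain ⟨hd, he⟩ := hde
            have hI := inner_bound Y hY d e hd he
            calc ((Nat.totient d : ℝ≥0∞))⁻¹ * (((Nat.totient e : ℝ≥0∞))⁻¹ *
                  ∑' k : ℕ, (if Y < (k : ℝ) ∧ d ∣ k ∧ e ∣ k then ((k : ℝ≥0∞))⁻¹ ^ 2 else 0))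
                ≤ ((Nat.totient d : ℝ≥0∞))⁻¹ * (((Nat.totient e : ℝ≥0∞))⁻¹ *
                  (A * ((Nat.lcm d e : ℝ≥0∞))⁻¹)) := by
                  exact mul_le_mul_right (mul_le_mul_right hI _) _
              _ = ∑' g : ℕ, Q g d e := by
                  have huu : uu d = ((Nat.totient d : ℝ≥0∞))⁻¹ * ((d : ℝ≥0∞))⁻¹ := by
                    rw [uu, if_neg hd]
                  have huue : uu e = ((Nat.totient e : ℝ≥0∞))⁻¹ * ((e : ℝ≥0∞))⁻¹ := by
                    rw [uu, if_neg he]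
                  have hcond : ∀ g : ℕ, (if g ∣ d ∧ g ∣ e ∧ d ≠ 0 ∧ e ≠ 0
                        then (Nat.totient g : ℝ≥0∞) else 0)
                      = (if g ∣ d ∧ g ∣ e then (Nat.totient g : ℝ≥0∞) else 0) := by
                    intro g
                    by_cases h : g ∣ d ∧ g ∣ e
                    · rw [if_pos ⟨h.1, h.2, hd, he⟩, if_pos h]
                    · rw [if_neg (fun hh => h ⟨hh.1, hh.2.1⟩), if_neg h]
                  have hRHS : ∑' g : ℕ, Q g d e
                      = A * ((∑' g : ℕ, (if g ∣ d ∧ g ∣ e then (Nat.totient g : ℝ≥0∞) else 0)) *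
                          (uu d * uu e)) := by
                    rw [hQ]
                    simp only []
                    rw [ENNReal.tsum_mul_left]
                    congr 1
                    rw [ENNReal.tsum_mul_right]
                    congr 1
                    exact tsum_congr hcond
                  rw [hRHS, lcm_inv_eq d e hd he, gcd_expand d e hd, huu, huue]
                  ring
          · -- d = 0 or e = 0 : inner sum is zero
            have hIzero : ∑' k : ℕ,
                (if Y < (k : ℝ) ∧ d ∣ k ∧ e ∣ k then ((k : ℝ≥0∞))⁻¹ ^ 2 else 0) = 0 := by
              rw [ENNReal.tsum_eq_zero]
              intro k
              rw [if_neg]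
              rintro ⟨h1, h2, h3⟩
              rcases not_and_or.mp hde with h | h
              · push_neg at h; subst h
                exact hk0 k h1 (Nat.eq_zero_of_zero_dvd h2)
              · push_neg at h; subst h
                exact hk0 k h1 (Nat.eq_zero_of_zero_dvd h3)
            have hQzero : ∀ g : ℕ, Q g d e = 0 := by
              intro g
              rw [hQ]
              simp only []
              rw [if_neg, zero_mul, mul_zero]
              rintro ⟨-, -, h3, h4⟩
              exact hde ⟨h3, h4⟩
            rw [hIzero, tsum_congr hQzero]
            simp
      _ = ∑' g : ℕ, ∑' d : ℕ, ∑' e : ℕ, Q g d e := by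
          calc ∑' d : ℕ, ∑' e : ℕ, ∑' g : ℕ, Q g d e
              = ∑' d : ℕ, ∑' g : ℕ, ∑' e : ℕ, Q g d e :=
                tsum_congr fun d => ENNReal.tsum_comm (f := fun e g => Q g d e)
            _ = ∑' g : ℕ, ∑' d : ℕ, ∑' e : ℕ, Q g d e :=
                ENNReal.tsum_comm (f := fun d g => ∑' e : ℕ, Q g d e)
      _ ≤ ∑' g : ℕ, A * ((∑' a : ℕ, uu a) ^ 2 * vv g) := by
          apply ENNReal.tsum_le_tsum
          intro g
          have hsplit : ∀ d e : ℕ, Q g d e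
              = A * ((Nat.totient g : ℝ≥0∞) *
                ((if g ∣ d then uu d else 0) * (if g ∣ e then uu e else 0))) := by
            intro d e
            rw [hQ]
            simp only []
            by_cases h1 : g ∣ d <;> by_cases h2 : g ∣ e <;>
              by_cases h3 : d = 0 <;> by_cases h4 : e = 0 <;>
              simp [h1, h2, h3, h4, uu]
          rw [tsum_congr (fun d => tsum_congr (fun e => hsplit d e))]
          have hstep : ∀ d : ℕ, (∑' e : ℕ, A * ((Nat.totient g : ℝ≥0∞) *
                ((if g ∣ d then uu d else 0) * (if g ∣ e then uu e else 0))))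
              = A * ((Nat.totient g : ℝ≥0∞) *
                ((if g ∣ d then uu d else 0) * (∑' e : ℕ, (if g ∣ e then uu e else 0)))) := by
            intro d
            rw [ENNReal.tsum_mul_left, ENNReal.tsum_mul_left, ENNReal.tsum_mul_left]
          rw [tsum_congr hstep, ENNReal.tsum_mul_left, ENNReal.tsum_mul_left,
            ENNReal.tsum_mul_right]
          rcases eq_or_ne g 0 with rfl | hg
          · simp
          · have hR := R_bound g hg
            have hφg : ((Nat.totient g : ℝ≥0∞)) ≠ 0 := by
              exact_mod_cast (Nat.totient_pos.mpr (Nat.pos_of_ne_zero hg)).ne'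
            have hφgt : ((Nat.totient g : ℝ≥0∞)) ≠ ∞ := ENNReal.natCast_ne_top _
            calc A * ((Nat.totient g : ℝ≥0∞) *
                  ((∑' d : ℕ, (if g ∣ d then uu d else 0)) *
                    (∑' e : ℕ, (if g ∣ e then uu e else 0))))
                ≤ A * ((Nat.totient g : ℝ≥0∞) *
                  ((((Nat.totient g : ℝ≥0∞))⁻¹ * ((g : ℝ≥0∞))⁻¹ * ∑' a : ℕ, uu a) *
                    (((Nat.totient g : ℝ≥0∞))⁻¹ * ((g : ℝ≥0∞))⁻¹ * ∑' a : ℕ, uu a))) := by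
                  exact mul_le_mul_right (mul_le_mul_right (mul_le_mul' hR hR) _) _
              _ = A * ((∑' a : ℕ, uu a) ^ 2 * vv g) := by
                  rw [vv, if_neg hg]
                  have hc : (Nat.totient g : ℝ≥0∞) *
                      (((Nat.totient g : ℝ≥0∞))⁻¹ * ((Nat.totient g : ℝ≥0∞))⁻¹)
                      = ((Nat.totient g : ℝ≥0∞))⁻¹ := by
                    rw [← mul_assoc, ENNReal.mul_inv_cancel hφg hφgt, one_mul]
                  calc A * ((Nat.totient g : ℝ≥0∞) *
                        ((((Nat.totient g : ℝ≥0∞))⁻¹ * ((g : ℝ≥0∞))⁻¹ * ∑' a : ℕ, uu a) *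
                          (((Nat.totient g : ℝ≥0∞))⁻¹ * ((g : ℝ≥0∞))⁻¹ * ∑' a : ℕ, uu a)))
                      = A * (((Nat.totient g : ℝ≥0∞) *
                          (((Nat.totient g : ℝ≥0∞))⁻¹ * ((Nat.totient g : ℝ≥0∞))⁻¹)) *
                          (((g : ℝ≥0∞))⁻¹ * ((g : ℝ≥0∞))⁻¹) *
                          ((∑' a : ℕ, uu a) * (∑' a : ℕ, uu a))) := by ring
                    _ = A * ((∑' a : ℕ, uu a) ^ 2 *
                          (((Nat.totient g : ℝ≥0∞))⁻¹ * (((g : ℝ≥0∞))⁻¹) ^ 2)) := by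
                        rw [hc]
                        try ring
      _ = A * (∑' a : ℕ, uu a) ^ 2 * ∑' g : ℕ, vv g := by
          rw [ENNReal.tsum_mul_left]
          rw [ENNReal.tsum_mul_left]
          ring
      _ ≤ A * ENNReal.ofReal c1 ^ 2 * ENNReal.ofReal c2 := by
          gcongr
          · exact tsum_uu_le
          · exact tsum_vv_le
      _ = ENNReal.ofReal ((2 * c1 ^ 2 * c2) / Y) := by
          rw [hA, ← ENNReal.ofReal_pow c1_nonneg,
            ← ENNReal.ofReal_mul (by positivity),
            ← ENNReal.ofReal_mul (by positivity)]
          congr 1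
          field_simp
  -- convert to the real statement
  have hpoint : ∀ k : ℕ,
      ENNReal.ofReal (if Y < (k : ℝ) then 1 / (Nat.totient k : ℝ) ^ 2 else 0)
        = (if Y < (k : ℝ) then ((Nat.totient k : ℝ≥0∞))⁻¹ ^ 2 else 0) := by
    intro k
    split
    · rename_i hk
      have hφ : (0:ℝ) < (Nat.totient k : ℝ) := by
        exact_mod_cast Nat.totient_pos.mpr (Nat.pos_of_ne_zero (hk0 k hk))
      rw [one_div, ← ENNReal.inv_pow, ← ENNReal.ofReal_natCast,
        ← ENNReal.ofReal_pow (by positivity), ← ENNReal.ofReal_inv_of_pos (by positivity)]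
    · simp
  by_cases hsum : Summable (fun k : ℕ => if Y < (k : ℝ) then 1 / (Nat.totient k : ℝ) ^ 2 else 0)
  · have hnn : ∀ k : ℕ, 0 ≤ (if Y < (k : ℝ) then 1 / (Nat.totient k : ℝ) ^ 2 else 0) := by
      intro k; split <;> positivity
    have heq := ENNReal.ofReal_tsum_of_nonneg hnn hsum
    rw [tsum_congr hpoint] at heq
    rw [← heq] at main
    exact (ENNReal.ofReal_le_ofReal_iff (by positivity)).mp main
  · rw [tsum_eq_zero_of_not_summable hsum]
    positivity
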